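/- The map ψ : R_p → End(H_p) defined by ψ(A)(π(h)) = π(Ah) is a surjective ring homomorphism. -/

import Mathlib

/-- The subring `R_p` of integer matrices with `p ^ (e i - e j) ∣ A i j` for `j ≤ i`. -/
def Rp (p n : ℕ) (e : Fin n → ℕ) (he : Monotone e) :
    Subring (Matrix (Fin n) (Fin n) ℤ) where
  carrier := {A | ∀ i j, j ≤ i → ((p : ℤ) ^ (e i - e j)) ∣ A i j}
  zero_mem' := by intro i j _; simp
  one_mem' := by
    intro i j hji
    rcases eq_or_ne i j with rfl | hne
    · simp
    · simp [Matrix.one_apply, hne]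
  add_mem' := by
    intro A B hA hB i j h
    simpa [Matrix.add_apply] using dvd_add (hA i j h) (hB i j h)
  neg_mem' := by
    intro A hA i j h
    simpa [Matrix.neg_apply] using (hA i j h).neg_right
  mul_mem' := by
    intro A B hA hB i j hji
    rw [Matrix.mul_apply]
    refine Finset.dvd_sum fun k _ => ?_
    rcases le_total k j with hk | hk
    · exact dvd_mul_of_dvd_left
        ((pow_dvd_pow _ (Nat.sub_le_sub_left (he hk) _)).trans (hA i k (hk.trans hji))) _
    · rcases le_total k i with hki | hki
      · have h3 : (p : ℤ) ^ (e i - e j) ∣ (p : ℤ) ^ (e i - e k) * (p : ℤ) ^ (e k - e j) := by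
          rw [← pow_add]
          apply pow_dvd_pow
          have := he hki; have := he hk; omega
        exact h3.trans (mul_dvd_mul (hA i k hki) (hB k j hk))
      · exact dvd_mul_of_dvd_right
          ((pow_dvd_pow _ (Nat.sub_le_sub_right (he hki) _)).trans (hB k j hk)) _

set_option linter.unusedVariables false


section Aux

variable (p n : ℕ) (e : Fin n → ℕ)

/-- coordinatewise reduction as AddMonoidHom -/
def piRed : (Fin n → ℤ) →+ (∀ i : Fin n, ZMod (p ^ e i)) :=
  AddMonoidHom.mk' (fun h i => ((h i : ZMod (p ^ e i)))) (by
    intro a b; funext i; simp [Pi.add_apply])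

lemma piRed_apply (h : Fin n → ℤ) (i : Fin n) :
    piRed p n e h i = ((h i : ZMod (p ^ e i))) := rfl

lemma piRed_surj (hp : p ≠ 0) : Function.Surjective (piRed p n e) := by
  intro x
  refine ⟨fun i => ((x i).val : ℤ), funext fun i => ?_⟩
  haveI : NeZero (p ^ e i) := ⟨pow_ne_zero _ hp⟩
  rw [piRed_apply]
  push_cast
  exact ZMod.natCast_rightInverse (x i)

noncomputable def psiA (hp : p ≠ 0) (A : Matrix (Fin n) (Fin n) ℤ)
    (hA : ∀ i j, ((p : ℤ) ^ (e i)) ∣ A i j * (p : ℤ) ^ (e j)) :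
    AddMonoid.End (∀ i : Fin n, ZMod (p ^ e i)) :=
  AddMonoidHom.mk' (fun x i => ∑ j, ZMod.lift (p ^ e j)
      ⟨(Int.castAddHom (ZMod (p ^ e i))).comp (AddMonoidHom.mulLeft (A i j)), by
        haveI : NeZero (p ^ e i) := ⟨pow_ne_zero _ hp⟩
        simp only [AddMonoidHom.comp_apply, AddMonoidHom.coe_mulLeft, Int.coe_castAddHom]
        rw [ZMod.intCast_zmod_eq_zero_iff_dvd]
        push_cast
        exact hA i j⟩ (x j))
    (by intro a b; funext i; simp [Pi.add_apply, map_add, Finset.sum_add_distrib])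

lemma psiA_red (hp : p ≠ 0) (A : Matrix (Fin n) (Fin n) ℤ)
    (hA : ∀ i j, ((p : ℤ) ^ (e i)) ∣ A i j * (p : ℤ) ^ (e j)) (h : Fin n → ℤ) :
    psiA p n e hp A hA (piRed p n e h) = piRed p n e (A.mulVec h) := by
  funext i
  show ∑ j, ZMod.lift _ _ ((h j : ZMod (p ^ e j))) = _
  rw [piRed_apply]
  simp only [ZMod.lift_coe, AddMonoidHom.comp_apply,
    AddMonoidHom.coe_mulLeft, Int.coe_castAddHom, Matrix.mulVec, dotProduct]
  push_cast
  rfl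

end Aux

section Main


noncomputable def Psi (p n : ℕ) (hp : p ≠ 0) (e : Fin n → ℕ)
    (S : Subring (Matrix (Fin n) (Fin n) ℤ))
    (hd : ∀ A : S, ∀ i j, ((p : ℤ) ^ (e i)) ∣ (A : Matrix (Fin n) (Fin n) ℤ) i j * (p : ℤ) ^ (e j)) :
    S →+* AddMonoid.End (∀ i : Fin n, ZMod (p ^ e i)) where
  toFun A := psiA p n e hp A.1 (hd A)
  map_one' := by
    apply AddMonoidHom.ext
    intro x
    obtain ⟨h, rfl⟩ := piRed_surj p n e hp x
    show psiA p n e hp ((1 : S) : Matrix (Fin n) (Fin n) ℤ) (hd 1) (piRed p n e h) = _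
    rw [psiA_red]
    show piRed p n e ((1 : Matrix (Fin n) (Fin n) ℤ).mulVec h) = _
    rw [Matrix.one_mulVec]
    rfl
  map_mul' := by
    intro A B
    apply AddMonoidHom.ext
    intro x
    obtain ⟨h, rfl⟩ := piRed_surj p n e hp x
    show _ = psiA p n e hp (A : Matrix (Fin n) (Fin n) ℤ) (hd _)
      ((psiA p n e hp (B : Matrix (Fin n) (Fin n) ℤ) (hd _)) (piRed p n e h))
    erw [psiA_red]
    rw [psiA_red, psiA_red, Matrix.mulVec_mulVec]
    rfl
  map_zero' := by
    apply AddMonoidHom.ext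
    intro x
    obtain ⟨h, rfl⟩ := piRed_surj p n e hp x
    erw [psiA_red]
    show piRed p n e ((0 : Matrix (Fin n) (Fin n) ℤ).mulVec h) = _
    rw [Matrix.zero_mulVec, map_zero]
    rfl
  map_add' := by
    intro A B
    apply AddMonoidHom.ext
    intro x
    obtain ⟨h, rfl⟩ := piRed_surj p n e hp x
    show _ = psiA p n e hp (A : Matrix (Fin n) (Fin n) ℤ) (hd _) (piRed p n e h)
      + psiA p n e hp (B : Matrix (Fin n) (Fin n) ℤ) (hd _) (piRed p n e h)
    erw [psiA_red]
    rw [psiA_red, psiA_red]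
    show piRed p n e (((A : Matrix (Fin n) (Fin n) ℤ) + B).mulVec h) = _
    rw [Matrix.add_mulVec, map_add]

lemma Psi_red (p n : ℕ) (hp : p ≠ 0) (e : Fin n → ℕ)
    (S : Subring (Matrix (Fin n) (Fin n) ℤ))
    (hd : ∀ A : S, ∀ i j, ((p : ℤ) ^ (e i)) ∣ (A : Matrix (Fin n) (Fin n) ℤ) i j * (p : ℤ) ^ (e j))
    (A : S) (h : Fin n → ℤ) :
    Psi p n hp e S hd A (piRed p n e h) = piRed p n e ((A : Matrix (Fin n) (Fin n) ℤ).mulVec h) :=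
  psiA_red p n e hp _ (hd A) h

theorem stmt6_aux (p n : ℕ) (hp : p.Prime) (e : Fin n → ℕ)
    (he1 : ∀ i, 1 ≤ e i) (he : Monotone e)
    (S : Subring (Matrix (Fin n) (Fin n) ℤ))
    (hmem : ∀ A : Matrix (Fin n) (Fin n) ℤ,
      A ∈ S ↔ ∀ i j, j ≤ i → ((p : ℤ) ^ (e i - e j)) ∣ A i j) :
    ∃ ψ : S →+* AddMonoid.End (∀ i : Fin n, ZMod (p ^ e i)),
      (∀ A : S, ∀ h : Fin n → ℤ,
        ψ A (fun i => ((h i : ZMod (p ^ e i)))) =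
          fun i => (((A : Matrix (Fin n) (Fin n) ℤ).mulVec h i : ℤ) : ZMod (p ^ e i))) ∧
      Function.Surjective ψ := by
  have hp0 : p ≠ 0 := hp.ne_zero
  have hd : ∀ A : S, ∀ i j,
      ((p : ℤ) ^ (e i)) ∣ (A : Matrix (Fin n) (Fin n) ℤ) i j * (p : ℤ) ^ (e j) := by
    intro A i j
    rcases le_total j i with hji | hij
    · have h1 : (p : ℤ) ^ e i = (p : ℤ) ^ (e i - e j) * (p : ℤ) ^ e j := by
        rw [← pow_add]; congr 1; have := he hji; omega
      rw [h1]
      exact mul_dvd_mul ((hmem A.1).1 A.2 i j hji) dvd_rfl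
    · exact dvd_mul_of_dvd_right (pow_dvd_pow _ (he hij)) _
  refine ⟨Psi p n hp0 e S hd, fun A h => Psi_red p n hp0 e S hd A h, ?_⟩
  intro φ
  -- the generators ε j = π (single j 1)
  set ε : Fin n → (∀ i : Fin n, ZMod (p ^ e i)) :=
    fun j => piRed p n e (Pi.single j (1 : ℤ)) with hε
  -- φ (ε j) is killed by p ^ e j
  have hkill : ∀ j, (p ^ e j) • ε j = 0 := by
    intro j
    funext i
    simp only [hε, Pi.smul_apply, Pi.zero_apply, piRed_apply]
    rcases eq_or_ne j i with rfl | hne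
    · rw [Pi.single_eq_same, nsmul_eq_mul]
      simp
    · rw [Pi.single_eq_of_ne (Ne.symm hne)]
      simp
  have hkillφ : ∀ j, (p ^ e j) • φ (ε j) = 0 := by
    intro j
    rw [← map_nsmul, hkill, map_zero]
  -- the matrix of lifted values
  set A : Matrix (Fin n) (Fin n) ℤ := fun i j => (((φ (ε j)) i).val : ℤ) with hAdef
  have hcast : ∀ i j, ((A i j : ZMod (p ^ e i))) = φ (ε j) i := by
    intro i j
    haveI : NeZero (p ^ e i) := ⟨pow_ne_zero _ hp0⟩
    rw [hAdef]
    push_cast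
    exact ZMod.natCast_rightInverse _
  have hAmem : A ∈ S := by
    rw [hmem]
    intro i j hji
    haveI : NeZero (p ^ e i) := ⟨pow_ne_zero _ hp0⟩
    have h0 : ((p ^ e j * ((φ (ε j)) i).val : ℕ) : ZMod (p ^ e i)) = 0 := by
      rw [Nat.cast_mul, ZMod.natCast_val, ZMod.cast_id]
      have := congrFun (hkillφ j) i
      rwa [Pi.smul_apply, nsmul_eq_mul, Pi.zero_apply] at this
    rw [ZMod.natCast_eq_zero_iff] at h0
    have hsplit : p ^ e i = p ^ e j * p ^ (e i - e j) := by
      rw [← pow_add]; congr 1; have := he hji; omega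
    have h1 : p ^ (e i - e j) ∣ ((φ (ε j)) i).val := by
      obtain ⟨c, hc⟩ := h0
      refine ⟨c, ?_⟩
      apply Nat.eq_of_mul_eq_mul_left (pow_pos hp.pos (e j))
      rw [hc, hsplit]; ring
    have h2 : ((p : ℤ)) ^ (e i - e j) ∣ ((((φ (ε j)) i).val : ℕ) : ℤ) := by
      exact_mod_cast h1
    exact h2
  refine ⟨⟨A, hAmem⟩, ?_⟩
  apply AddMonoidHom.ext
  intro x
  obtain ⟨h, rfl⟩ := piRed_surj p n e hp0 x
  erw [Psi_red]
  have hdec : h = ∑ j, h j • Pi.single j (1 : ℤ) := by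
    conv_lhs => rw [← Finset.univ_sum_single h]
    refine Finset.sum_congr rfl fun j _ => ?_
    rw [← Pi.single_smul, smul_eq_mul, mul_one]
  have hφ : φ (piRed p n e h) = ∑ j, h j • φ (ε j) := by
    conv_lhs => rw [hdec]
    rw [map_sum, map_sum]
    exact Finset.sum_congr rfl fun j _ => by rw [map_zsmul (piRed p n e), map_zsmul φ]
  erw [hφ]
  funext i
  rw [piRed_apply, Finset.sum_apply, Matrix.mulVec, dotProduct]
  push_cast
  refine Finset.sum_congr rfl fun j _ => ?_
  rw [Pi.smul_apply, ← hcast i j, zsmul_eq_mul]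
  push_cast
  ring

end Main

/-- The map `ψ : R_p → End(H_p)`, `ψ A (π h) = π (A h)` (with
`π : ℤⁿ → H_p` coordinatewise reduction), is a surjective ring homomorphism. -/
theorem stmt_6 (p n : ℕ) (hp : p.Prime) (e : Fin n → ℕ)
    (he1 : ∀ i, 1 ≤ e i) (he : Monotone e) :
    ∃ ψ : Rp p n e he →+* AddMonoid.End (∀ i : Fin n, ZMod (p ^ e i)),
      (∀ A : Rp p n e he, ∀ h : Fin n → ℤ,
        ψ A (fun i => ((h i : ZMod (p ^ e i)))) =
          fun i => (((A : Matrix (Fin n) (Fin n) ℤ).mulVec h i : ℤ) : ZMod (p ^ e i))) ∧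
      Function.Surjective ψ :=
  stmt6_aux p n hp e he1 he (Rp p n e he) (fun A => Iff.rfl)
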